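/- Let F : M → M be local, increasing, and respect a.e. equality, and let G_l and G_r be a conditional left-inverse and a conditional right-inverse of F, respectively. Then G_l and G_r are local, increasing, and respect a.e. equality; moreover G_l is left-continuous, i.e. for every s ∈ M, on the event {s > −∞} the function G_l(s) agrees P-a.e. with an essential supremum of { G_l(s′) : s′ ∈ M, s′ < s a.e. on {s > −∞} }, and G_r is right-continuous, i.e. for every s ∈ M, on {s < +∞} the function G_r(s) agrees P-a.e. with an essential infimum of { G_r(s′) : s′ ∈ M, s′ > s a.e. on {s < +∞} }. -/

import Mathlib

open MeasureTheory

variable {Ω : Type*} [MeasurableSpace Ω]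

/-- `M`: the measurable functions `Ω → [-∞, ∞]`. -/
def MSp (Ω : Type*) [MeasurableSpace Ω] : Type _ := {f : Ω → EReal // Measurable f}

/-- The constant function `+∞` as an element of `M`. -/
noncomputable def MSp.mtop (Ω : Type*) [MeasurableSpace Ω] : MSp Ω := ⟨fun _ => ⊤, measurable_const⟩

/-- The constant function `-∞` as an element of `M`. -/
noncomputable def MSp.mbot (Ω : Type*) [MeasurableSpace Ω] : MSp Ω := ⟨fun _ => ⊥, measurable_const⟩

open Classical in
/-- The pointwise piecewise combination `1_A f + 1_{Aᶜ} g`. -/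
noncomputable def pcf (A : Set Ω) (f g : Ω → EReal) : Ω → EReal :=
  fun ω => if ω ∈ A then f ω else g ω

/-- The piecewise combination `1_A m + 1_{Aᶜ} n` as an element of `M`. -/
noncomputable def MSp.pc (A : Set Ω) (hA : MeasurableSet A) (m n : MSp Ω) : MSp Ω :=
  ⟨pcf A m.1 n.1, by classical unfold pcf; exact Measurable.ite hA m.2 n.2⟩

/-- `F : M → M` respects `P`-a.e. equality. -/
def RespectsAE (P : Measure Ω) (F : MSp Ω → MSp Ω) : Prop :=
  ∀ m n : MSp Ω, m.1 =ᵐ[P] n.1 → (F m).1 =ᵐ[P] (F n).1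

/-- `F : M → M` is increasing with respect to the `P`-a.e. order. -/
def IncreasingAE (P : Measure Ω) (F : MSp Ω → MSp Ω) : Prop :=
  ∀ m n : MSp Ω, m.1 ≤ᵐ[P] n.1 → (F m).1 ≤ᵐ[P] (F n).1

/-- `F : M → M` is local: `F(1_A m + 1_{Aᶜ} n) = 1_A F(m) + 1_{Aᶜ} F(n)` a.e. -/
def LocalAE (P : Measure Ω) (F : MSp Ω → MSp Ω) : Prop :=
  ∀ (A : Set Ω) (hA : MeasurableSet A) (m n : MSp Ω),
    (F (MSp.pc A hA m n)).1 =ᵐ[P] pcf A (F m).1 (F n).1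

/-- `g` is an essential infimum of the set `S ⊆ M`. -/
def IsEssInfM (P : Measure Ω) (S : Set (MSp Ω)) (g : MSp Ω) : Prop :=
  (∀ f ∈ S, g.1 ≤ᵐ[P] f.1) ∧ ∀ h : MSp Ω, (∀ f ∈ S, h.1 ≤ᵐ[P] f.1) → h.1 ≤ᵐ[P] g.1

/-- `g` is an essential supremum of the set `S ⊆ M`. -/
def IsEssSupM (P : Measure Ω) (S : Set (MSp Ω)) (g : MSp Ω) : Prop :=
  (∀ f ∈ S, f.1 ≤ᵐ[P] g.1) ∧ ∀ h : MSp Ω, (∀ f ∈ S, f.1 ≤ᵐ[P] h.1) → g.1 ≤ᵐ[P] h.1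

/-- `Gl` is a conditional left-inverse of `F`: writing `A_s = {F(+∞) ≥ s}`, one has
`Gl(s) = +∞` a.e. on `A_sᶜ` and, on `A_s`, `Gl(s)` agrees a.e. with an essential infimum
of `{ m ∈ M : F(m) ≥ s a.e. on A_s }`. -/
def IsCondLeftInv (P : Measure Ω) (F Gl : MSp Ω → MSp Ω) : Prop :=
  ∀ s : MSp Ω,
    (∀ᵐ ω ∂P, ω ∉ {ω' | s.1 ω' ≤ (F (MSp.mtop Ω)).1 ω'} → (Gl s).1 ω = ⊤) ∧
    ∃ g : MSp Ω,
      IsEssInfM P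
        {m : MSp Ω | ∀ᵐ ω ∂P, ω ∈ {ω' | s.1 ω' ≤ (F (MSp.mtop Ω)).1 ω'} →
          s.1 ω ≤ (F m).1 ω} g ∧
      ∀ᵐ ω ∂P, ω ∈ {ω' | s.1 ω' ≤ (F (MSp.mtop Ω)).1 ω'} → (Gl s).1 ω = g.1 ω

/-- `Gr` is a conditional right-inverse of `F`: writing `B_s = {F(-∞) ≤ s}`, one has
`Gr(s) = -∞` a.e. on `B_sᶜ` and, on `B_s`, `Gr(s)` agrees a.e. with an essential supremum
of `{ m ∈ M : F(m) ≤ s a.e. on B_s }`. -/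
def IsCondRightInv (P : Measure Ω) (F Gr : MSp Ω → MSp Ω) : Prop :=
  ∀ s : MSp Ω,
    (∀ᵐ ω ∂P, ω ∉ {ω' | (F (MSp.mbot Ω)).1 ω' ≤ s.1 ω'} → (Gr s).1 ω = ⊥) ∧
    ∃ g : MSp Ω,
      IsEssSupM P
        {m : MSp Ω | ∀ᵐ ω ∂P, ω ∈ {ω' | (F (MSp.mbot Ω)).1 ω' ≤ s.1 ω'} →
          (F m).1 ω ≤ s.1 ω} g ∧
      ∀ᵐ ω ∂P, ω ∈ {ω' | (F (MSp.mbot Ω)).1 ω' ≤ s.1 ω'} → (Gr s).1 ω = g.1 ω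

/-- `Fm` is a left-continuous version of `F`: `Fm(m) = -∞` a.e. on `{m = -∞}` and, on
`{m > -∞}`, `Fm(m)` agrees a.e. with an essential supremum of
`{ F(n) : n < m a.e. on {m > -∞} }`. -/
def IsLeftContVersion (P : Measure Ω) (F Fm : MSp Ω → MSp Ω) : Prop :=
  ∀ m : MSp Ω,
    (∀ᵐ ω ∂P, m.1 ω = ⊥ → (Fm m).1 ω = ⊥) ∧
    ∃ g : MSp Ω,
      IsEssSupM P
        (F '' {n : MSp Ω | ∀ᵐ ω ∂P, ω ∈ {ω' | ⊥ < m.1 ω'} → n.1 ω < m.1 ω}) g ∧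
      ∀ᵐ ω ∂P, ω ∈ {ω' | ⊥ < m.1 ω'} → (Fm m).1 ω = g.1 ω

/-- `Fp` is a right-continuous version of `F`: `Fp(m) = +∞` a.e. on `{m = +∞}` and, on
`{m < +∞}`, `Fp(m)` agrees a.e. with an essential infimum of
`{ F(n) : n > m a.e. on {m < +∞} }`. -/
def IsRightContVersion (P : Measure Ω) (F Fp : MSp Ω → MSp Ω) : Prop :=
  ∀ m : MSp Ω,
    (∀ᵐ ω ∂P, m.1 ω = ⊤ → (Fp m).1 ω = ⊤) ∧
    ∃ g : MSp Ω,
      IsEssInfM P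
        (F '' {n : MSp Ω | ∀ᵐ ω ∂P, ω ∈ {ω' | m.1 ω' < ⊤} → m.1 ω < n.1 ω}) g ∧
      ∀ᵐ ω ∂P, ω ∈ {ω' | m.1 ω' < ⊤} → (Fp m).1 ω = g.1 ω

namespace CondInvAux

/-- A measurable "midpoint" for `EReal`. -/
noncomputable def emid (a b : EReal) : EReal :=
  ((if a = ⊥ then (if b = ⊤ then 0 else b.toReal - 1)
    else if b = ⊤ then a.toReal + 1 else (a.toReal + b.toReal) / 2 : ℝ) : EReal)

lemma emid_meas {f g : Ω → EReal} (hf : Measurable f) (hg : Measurable g) :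
    Measurable fun ω => emid (f ω) (g ω) := by
  apply measurable_coe_real_ereal.comp
  apply Measurable.ite (hf (measurableSet_singleton (⊥ : EReal)))
  · apply Measurable.ite (hg (measurableSet_singleton (⊤ : EReal))) measurable_const
    exact hg.ereal_toReal.sub measurable_const
  · apply Measurable.ite (hg (measurableSet_singleton (⊤ : EReal)))
    · exact hf.ereal_toReal.add measurable_const
    · exact ((hf.ereal_toReal.add hg.ereal_toReal).div_const 2)

lemma emid_lt {a b : EReal} (hab : a < b) : a < emid a b ∧ emid a b < b := by
  unfold emid
  by_cases ha : a = ⊥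
  · subst ha
    by_cases hb : b = ⊤
    · subst hb; simp [EReal.bot_lt_coe, EReal.coe_lt_top]
    · have hb' : b ≠ ⊥ := hab.ne'
      rw [if_pos rfl, if_neg hb]
      refine ⟨EReal.bot_lt_coe _, ?_⟩
      conv_rhs => rw [← EReal.coe_toReal hb hb']
      exact_mod_cast sub_one_lt _
  · by_cases hb : b = ⊤
    · subst hb
      have ha' : a ≠ ⊤ := hab.ne_top
      rw [if_neg ha, if_pos rfl]
      refine ⟨?_, EReal.coe_lt_top _⟩
      conv_lhs => rw [← EReal.coe_toReal ha' ha]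
      exact_mod_cast lt_add_one _
    · have ha' : a ≠ ⊤ := hab.ne_top
      have hb' : b ≠ ⊥ := hab.ne_bot
      rw [if_neg ha, if_neg hb]
      have hr : a.toReal < b.toReal := by
        rw [← EReal.coe_lt_coe_iff, EReal.coe_toReal ha' ha, EReal.coe_toReal hb hb']
        exact hab
      constructor
      · conv_lhs => rw [← EReal.coe_toReal ha' ha]
        exact_mod_cast by linarith
      · conv_rhs => rw [← EReal.coe_toReal hb hb']
        exact_mod_cast by linarith

omit [MeasurableSpace Ω] in
lemma pcf_pos {A : Set Ω} {f g : Ω → EReal} {ω : Ω} (h : ω ∈ A) : pcf A f g ω = f ω := by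
  simp [pcf, h]

omit [MeasurableSpace Ω] in
lemma pcf_neg {A : Set Ω} {f g : Ω → EReal} {ω : Ω} (h : ω ∉ A) : pcf A f g ω = g ω := by
  simp [pcf, h]

lemma pc_pos {A : Set Ω} (hA : MeasurableSet A) (m n : MSp Ω) {ω : Ω} (h : ω ∈ A) :
    (MSp.pc A hA m n).1 ω = m.1 ω := pcf_pos h

lemma pc_neg {A : Set Ω} (hA : MeasurableSet A) (m n : MSp Ω) {ω : Ω} (h : ω ∉ A) :
    (MSp.pc A hA m n).1 ω = n.1 ω := pcf_neg h

lemma incr_respects (P : Measure Ω) (G : MSp Ω → MSp Ω) (h : IncreasingAE P G) :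
    RespectsAE P G := fun m n hmn =>
  (h m n hmn.le).antisymm (h n m hmn.symm.le)

end CondInvAux
namespace CondInvAux

variable {P : Measure Ω} {F Gl : MSp Ω → MSp Ω}

theorem gl_mono (hFloc : LocalAE P F) (hGl : IsCondLeftInv P F Gl) :
    IncreasingAE P Gl := by
  intro s₁ s₂ hs
  obtain ⟨hA1, g₁, hg₁, hgl₁⟩ := hGl s₁
  obtain ⟨hA2, g₂, hg₂, hgl₂⟩ := hGl s₂
  have hA₂m : MeasurableSet {ω' | s₂.1 ω' ≤ (F (MSp.mtop Ω)).1 ω'} :=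
    measurableSet_le s₂.2 (F _).2
  -- every m in the family for s₂ dominates g₁ on A₂
  have step1 : ∀ m ∈ {m : MSp Ω | ∀ᵐ ω ∂P,
      ω ∈ {ω' | s₂.1 ω' ≤ (F (MSp.mtop Ω)).1 ω'} → s₂.1 ω ≤ (F m).1 ω},
      ∀ᵐ ω ∂P, ω ∈ {ω' | s₂.1 ω' ≤ (F (MSp.mtop Ω)).1 ω'} → g₁.1 ω ≤ m.1 ω := by
    intro m hm
    have hmem : (MSp.pc _ hA₂m m (MSp.mtop Ω)) ∈ {m : MSp Ω | ∀ᵐ ω ∂P,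
        ω ∈ {ω' | s₁.1 ω' ≤ (F (MSp.mtop Ω)).1 ω'} → s₁.1 ω ≤ (F m).1 ω} := by
      have hloc := hFloc _ hA₂m m (MSp.mtop Ω)
      filter_upwards [hloc, hm, hs] with ω hloc hm hs hω
      rw [hloc]
      by_cases hω2 : ω ∈ {ω' | s₂.1 ω' ≤ (F (MSp.mtop Ω)).1 ω'}
      · rw [pcf_pos hω2]
        exact le_trans hs (hm hω2)
      · rw [pcf_neg hω2]
        exact hω
    have := hg₁.1 _ hmem
    filter_upwards [this] with ω hle hω2
    rw [pc_pos hA₂m m (MSp.mtop Ω) hω2] at hle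
    exact hle
  have step2 : ∀ᵐ ω ∂P, ω ∈ {ω' | s₂.1 ω' ≤ (F (MSp.mtop Ω)).1 ω'} → g₁.1 ω ≤ g₂.1 ω := by
    have hlb : ∀ m ∈ {m : MSp Ω | ∀ᵐ ω ∂P,
        ω ∈ {ω' | s₂.1 ω' ≤ (F (MSp.mtop Ω)).1 ω'} → s₂.1 ω ≤ (F m).1 ω},
        (MSp.pc _ hA₂m g₁ (MSp.mbot Ω)).1 ≤ᵐ[P] m.1 := by
      intro m hm
      filter_upwards [step1 m hm] with ω h
      by_cases hω2 : ω ∈ {ω' | s₂.1 ω' ≤ (F (MSp.mtop Ω)).1 ω'}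
      · rw [pc_pos hA₂m g₁ (MSp.mbot Ω) hω2]; exact h hω2
      · rw [pc_neg hA₂m g₁ (MSp.mbot Ω) hω2]; exact bot_le
    have := hg₂.2 _ hlb
    filter_upwards [this] with ω h hω2
    rw [pc_pos hA₂m g₁ (MSp.mbot Ω) hω2] at h
    exact h
  filter_upwards [hA2, hgl₁, hgl₂, step2, hs] with ω h2 e1 e2 st hsω
  by_cases hω2 : ω ∈ {ω' | s₂.1 ω' ≤ (F (MSp.mtop Ω)).1 ω'}
  · have hω1 : ω ∈ {ω' | s₁.1 ω' ≤ (F (MSp.mtop Ω)).1 ω'} := le_trans hsω hω2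
    rw [e1 hω1, e2 hω2]
    exact st hω2
  · rw [h2 hω2]
    exact le_top

/-- One-sided locality comparison: if `s = s₁` a.e. on `A` then `Gl s₁ ≤ Gl s` a.e. on `A`. -/
theorem gl_le_on (hFloc : LocalAE P F) (hGl : IsCondLeftInv P F Gl)
    {A : Set Ω} (hA : MeasurableSet A) (s s₁ : MSp Ω)
    (hss : ∀ᵐ ω ∂P, ω ∈ A → s.1 ω = s₁.1 ω) :
    ∀ᵐ ω ∂P, ω ∈ A → (Gl s₁).1 ω ≤ (Gl s).1 ω := by
  obtain ⟨hAs_top, g, hg, hgl⟩ := hGl s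
  obtain ⟨hAs1_top, g₁, hg₁, hgl₁⟩ := hGl s₁
  have hAm : MeasurableSet (A ∩ {ω' | s.1 ω' ≤ (F (MSp.mtop Ω)).1 ω'}) :=
    hA.inter (measurableSet_le s.2 (F _).2)
  -- every m in the family for s dominates g₁ on A ∩ A_s
  have step1 : ∀ m ∈ {m : MSp Ω | ∀ᵐ ω ∂P,
      ω ∈ {ω' | s.1 ω' ≤ (F (MSp.mtop Ω)).1 ω'} → s.1 ω ≤ (F m).1 ω},
      ∀ᵐ ω ∂P, ω ∈ A → g₁.1 ω ≤ m.1 ω := by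
    intro m hm
    have hmem : (MSp.pc A hA m (MSp.mtop Ω)) ∈ {m : MSp Ω | ∀ᵐ ω ∂P,
        ω ∈ {ω' | s₁.1 ω' ≤ (F (MSp.mtop Ω)).1 ω'} → s₁.1 ω ≤ (F m).1 ω} := by
      have hloc := hFloc A hA m (MSp.mtop Ω)
      filter_upwards [hloc, hm, hss] with ω hloc hm hss hω
      rw [hloc]
      by_cases hωA : ω ∈ A
      · rw [pcf_pos hωA, ← hss hωA]
        have hωs : ω ∈ {ω' | s.1 ω' ≤ (F (MSp.mtop Ω)).1 ω'} := by
          show s.1 ω ≤ _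
          rw [hss hωA]; exact hω
        exact hm hωs
      · rw [pcf_neg hωA]
        exact hω
    have := hg₁.1 _ hmem
    filter_upwards [this] with ω hle hωA
    rw [pc_pos hA m (MSp.mtop Ω) hωA] at hle
    exact hle
  have step2 : ∀ᵐ ω ∂P, ω ∈ A ∩ {ω' | s.1 ω' ≤ (F (MSp.mtop Ω)).1 ω'} → g₁.1 ω ≤ g.1 ω := by
    have hlb : ∀ m ∈ {m : MSp Ω | ∀ᵐ ω ∂P,
        ω ∈ {ω' | s.1 ω' ≤ (F (MSp.mtop Ω)).1 ω'} → s.1 ω ≤ (F m).1 ω},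
        (MSp.pc _ hAm g₁ (MSp.mbot Ω)).1 ≤ᵐ[P] m.1 := by
      intro m hm
      filter_upwards [step1 m hm] with ω h
      by_cases hω2 : ω ∈ A ∩ {ω' | s.1 ω' ≤ (F (MSp.mtop Ω)).1 ω'}
      · rw [pc_pos hAm g₁ (MSp.mbot Ω) hω2]; exact h hω2.1
      · rw [pc_neg hAm g₁ (MSp.mbot Ω) hω2]; exact bot_le
    have := hg.2 _ hlb
    filter_upwards [this] with ω h hω2
    rw [pc_pos hAm g₁ (MSp.mbot Ω) hω2] at h
    exact h
  filter_upwards [hAs_top, hgl, hgl₁, step2, hss] with ω htop e e1 st hssω hωA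
  by_cases hωs : ω ∈ {ω' | s.1 ω' ≤ (F (MSp.mtop Ω)).1 ω'}
  · have hωs1 : ω ∈ {ω' | s₁.1 ω' ≤ (F (MSp.mtop Ω)).1 ω'} := by
      show s₁.1 ω ≤ _
      rw [← hssω hωA]; exact hωs
    rw [e hωs, e1 hωs1]
    exact st ⟨hωA, hωs⟩
  · rw [htop hωs]
    exact le_top

/-- If `s = s₁` a.e. on `A` then `Gl s = Gl s₁` a.e. on `A`. -/
theorem gl_eq_on (hFloc : LocalAE P F) (hGl : IsCondLeftInv P F Gl)
    {A : Set Ω} (hA : MeasurableSet A) (s s₁ : MSp Ω)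
    (hss : ∀ᵐ ω ∂P, ω ∈ A → s.1 ω = s₁.1 ω) :
    ∀ᵐ ω ∂P, ω ∈ A → (Gl s).1 ω = (Gl s₁).1 ω := by
  have h1 := gl_le_on hFloc hGl hA s s₁ hss
  have h2 := gl_le_on hFloc hGl hA s₁ s (by filter_upwards [hss] with ω h hω; exact (h hω).symm)
  filter_upwards [h1, h2] with ω h1 h2 hω
  exact le_antisymm (h2 hω) (h1 hω)

theorem gl_local (hFloc : LocalAE P F) (hGl : IsCondLeftInv P F Gl) :
    LocalAE P Gl := by
  intro A hA m n
  have h₁ := gl_eq_on hFloc hGl hA (MSp.pc A hA m n) m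
    (Filter.Eventually.of_forall fun ω hω => pc_pos hA m n hω)
  have h₂ := gl_eq_on hFloc hGl hA.compl (MSp.pc A hA m n) n
    (Filter.Eventually.of_forall fun ω hω => pc_neg hA m n hω)
  filter_upwards [h₁, h₂] with ω h₁ h₂
  by_cases hω : ω ∈ A
  · rw [pcf_pos hω]; exact h₁ hω
  · rw [pcf_neg hω]; exact h₂ hω

/-- Key step for left-continuity: any a.e. upper bound of `{Gl s' : s' < s on C}`
dominates `Gl s` a.e. on `C = {s > ⊥}`. -/
theorem gl_key (hFloc : LocalAE P F) (hFinc : IncreasingAE P F)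
    (hGl : IsCondLeftInv P F Gl) (s h : MSp Ω)
    (hh : ∀ s' : MSp Ω, (∀ᵐ ω ∂P, ω ∈ {ω' | (⊥ : EReal) < s.1 ω'} → s'.1 ω < s.1 ω) →
      (Gl s').1 ≤ᵐ[P] h.1) :
    ∀ᵐ ω ∂P, ω ∈ {ω' | (⊥ : EReal) < s.1 ω'} → (Gl s).1 ω ≤ h.1 ω := by
  set B : Set Ω := {ω' | (⊥ : EReal) < s.1 ω'} ∩ {ω | h.1 ω < (Gl s).1 ω} with hBdef
  have hB : MeasurableSet B :=
    (measurableSet_lt measurable_const s.2).inter (measurableSet_lt h.2 (Gl s).2)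
  set x : MSp Ω := MSp.pc B hB ⟨fun ω => emid (h.1 ω) ((Gl s).1 ω), emid_meas h.2 (Gl s).2⟩
    (MSp.mtop Ω) with hxdef
  have hx_lt : ∀ ω ∈ B, h.1 ω < x.1 ω ∧ x.1 ω < (Gl s).1 ω := by
    intro ω hω
    have hlt : h.1 ω < (Gl s).1 ω := hω.2
    have := emid_lt hlt
    rw [hxdef]
    erw [pc_pos hB _ (MSp.mtop Ω) hω]
    exact this
  obtain ⟨hAs_top, g, hg, hgl⟩ := hGl s
  have hAs : MeasurableSet {ω' | s.1 ω' ≤ (F (MSp.mtop Ω)).1 ω'} :=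
    measurableSet_le s.2 (F _).2
  -- Claim: F x < s a.e. on B
  have hFx : ∀ᵐ ω ∂P, ω ∈ B → (F x).1 ω < s.1 ω := by
    set D : Set Ω := (B ∩ {ω' | s.1 ω' ≤ (F (MSp.mtop Ω)).1 ω'}) ∩
      {ω | s.1 ω ≤ (F x).1 ω} with hDdef
    have hD : MeasurableSet D := (hB.inter hAs).inter (measurableSet_le s.2 (F x).2)
    have hmem : (MSp.pc D hD x (MSp.mtop Ω)) ∈ {m : MSp Ω | ∀ᵐ ω ∂P,
        ω ∈ {ω' | s.1 ω' ≤ (F (MSp.mtop Ω)).1 ω'} → s.1 ω ≤ (F m).1 ω} := by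
      have hloc := hFloc D hD x (MSp.mtop Ω)
      filter_upwards [hloc] with ω hloc hω
      rw [hloc]
      by_cases hωD : ω ∈ D
      · rw [pcf_pos hωD]; exact hωD.2
      · rw [pcf_neg hωD]; exact hω
    have hgle := hg.1 _ hmem
    have hDnull : ∀ᵐ ω ∂P, ω ∉ D := by
      filter_upwards [hgle, hgl] with ω hgle hgl
      intro hωD
      have h1 : (Gl s).1 ω = g.1 ω := hgl hωD.1.2
      have h2 : g.1 ω ≤ x.1 ω := by
        rw [pc_pos hD x (MSp.mtop Ω) hωD] at hgle
        exact hgle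
      have h3 : x.1 ω < (Gl s).1 ω := (hx_lt ω hωD.1.1).2
      rw [h1] at h3
      exact absurd (h2.trans_lt h3) (lt_irrefl _)
    have hFxtop : (F x).1 ≤ᵐ[P] (F (MSp.mtop Ω)).1 :=
      hFinc x (MSp.mtop Ω) (Filter.Eventually.of_forall fun ω => le_top)
    filter_upwards [hDnull, hFxtop] with ω hDn hFt hωB
    by_cases hωA : ω ∈ {ω' | s.1 ω' ≤ (F (MSp.mtop Ω)).1 ω'}
    · exact not_le.mp fun hc => hDn ⟨⟨hωB, hωA⟩, hc⟩
    · exact lt_of_le_of_lt hFt (not_le.mp hωA)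
  -- the approximating s'
  set s' : MSp Ω := MSp.pc B hB ⟨fun ω => emid ((F x).1 ω) (s.1 ω), emid_meas (F x).2 s.2⟩
    (MSp.mbot Ω) with hs'def
  have hs'SS : ∀ᵐ ω ∂P, ω ∈ {ω' | (⊥ : EReal) < s.1 ω'} → s'.1 ω < s.1 ω := by
    filter_upwards [hFx] with ω hFx hωC
    by_cases hωB : ω ∈ B
    · erw [hs'def, pc_pos hB _ (MSp.mbot Ω) hωB]
      exact (emid_lt (hFx hωB)).2
    · erw [hs'def, pc_neg hB _ (MSp.mbot Ω) hωB]
      exact hωC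
  have hGls'h := hh s' hs'SS
  have hs'gt : ∀ᵐ ω ∂P, ω ∈ B → (F x).1 ω < s'.1 ω := by
    filter_upwards [hFx] with ω hFx hωB
    erw [hs'def, pc_pos hB _ (MSp.mbot Ω) hωB]
    exact (emid_lt (hFx hωB)).1
  -- Claim: x ≤ Gl s' a.e. on B
  obtain ⟨hAs'_top, g', hg', hgl'⟩ := hGl s'
  have hAs' : MeasurableSet {ω' | s'.1 ω' ≤ (F (MSp.mtop Ω)).1 ω'} :=
    measurableSet_le s'.2 (F _).2
  have claim3m : ∀ m ∈ {m : MSp Ω | ∀ᵐ ω ∂P,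
      ω ∈ {ω' | s'.1 ω' ≤ (F (MSp.mtop Ω)).1 ω'} → s'.1 ω ≤ (F m).1 ω},
      ∀ᵐ ω ∂P, ω ∈ B ∩ {ω' | s'.1 ω' ≤ (F (MSp.mtop Ω)).1 ω'} → x.1 ω ≤ m.1 ω := by
    intro m hm
    set E : Set Ω := (B ∩ {ω' | s'.1 ω' ≤ (F (MSp.mtop Ω)).1 ω'}) ∩
      {ω | m.1 ω < x.1 ω} with hEdef
    have hE : MeasurableSet E := (hB.inter hAs').inter (measurableSet_lt m.2 x.2)
    have hle : (MSp.pc E hE m x).1 ≤ᵐ[P] x.1 := by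
      apply Filter.Eventually.of_forall
      intro ω
      by_cases hωE : ω ∈ E
      · rw [pc_pos hE m x hωE]; exact le_of_lt hωE.2
      · rw [pc_neg hE m x hωE]
    have hFle := hFinc _ x hle
    have hloc := hFloc E hE m x
    have hEnull : ∀ᵐ ω ∂P, ω ∉ E := by
      filter_upwards [hFle, hloc, hm, hs'gt] with ω h1 h2 h3 h4
      intro hωE
      have e1 : (F (MSp.pc E hE m x)).1 ω = (F m).1 ω := by rw [h2, pcf_pos hωE]
      have e2 : s'.1 ω ≤ (F m).1 ω := h3 hωE.1.2
      have e3 : (F x).1 ω < s'.1 ω := h4 hωE.1.1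
      rw [← e1] at e2
      exact absurd ((e2.trans h1).trans_lt e3) (lt_irrefl _)
    filter_upwards [hEnull] with ω hn hωBA
    exact not_lt.mp fun hc => hn ⟨hωBA, hc⟩
  have claim3 : ∀ᵐ ω ∂P, ω ∈ B → x.1 ω ≤ (Gl s').1 ω := by
    have hBA : MeasurableSet (B ∩ {ω' | s'.1 ω' ≤ (F (MSp.mtop Ω)).1 ω'}) := hB.inter hAs'
    have hlow := hg'.2 (MSp.pc _ hBA x (MSp.mbot Ω)) (by
      intro m hm
      filter_upwards [claim3m m hm] with ω hc
      by_cases hω : ω ∈ B ∩ {ω' | s'.1 ω' ≤ (F (MSp.mtop Ω)).1 ω'}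
      · rw [pc_pos hBA x (MSp.mbot Ω) hω]; exact hc hω
      · rw [pc_neg hBA x (MSp.mbot Ω) hω]; exact bot_le)
    filter_upwards [hlow, hgl', hAs'_top] with ω h1 h2 h3 hωB
    by_cases hωA : ω ∈ {ω' | s'.1 ω' ≤ (F (MSp.mtop Ω)).1 ω'}
    · rw [pc_pos hBA x (MSp.mbot Ω) ⟨hωB, hωA⟩] at h1
      rw [h2 hωA]
      exact h1
    · rw [h3 hωA]
      exact le_top
  -- conclude : B is null
  filter_upwards [claim3, hGls'h] with ω h1 h2 hωC
  by_contra hc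
  have hωB : ω ∈ B := ⟨hωC, not_le.mp hc⟩
  exact absurd ((hx_lt ω hωB).1.trans_le ((h1 hωB).trans h2)) (lt_irrefl _)

theorem gl_leftCont (hFloc : LocalAE P F) (hFinc : IncreasingAE P F)
    (hGl : IsCondLeftInv P F Gl) (s : MSp Ω) :
    ∃ g : MSp Ω,
      IsEssSupM P
        (Gl '' {s' : MSp Ω | ∀ᵐ ω ∂P, ω ∈ {ω' | ⊥ < s.1 ω'} → s'.1 ω < s.1 ω}) g ∧
      ∀ᵐ ω ∂P, ω ∈ {ω' | ⊥ < s.1 ω'} → (Gl s).1 ω = g.1 ω := by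
  have hC : MeasurableSet {ω' | (⊥ : EReal) < s.1 ω'} :=
    measurableSet_lt measurable_const s.2
  set t : MSp Ω := MSp.pc _ hC s (MSp.mtop Ω) with htdef
  have heqC : ∀ᵐ ω ∂P, ω ∈ {ω' | (⊥ : EReal) < s.1 ω'} → (Gl s).1 ω = (Gl t).1 ω :=
    gl_eq_on hFloc hGl hC s t
      (Filter.Eventually.of_forall fun ω hω => (pc_pos hC s (MSp.mtop Ω) hω).symm)
  refine ⟨Gl t, ⟨?_, ?_⟩, heqC⟩
  · rintro f ⟨s', hs', rfl⟩
    apply gl_mono hFloc hGl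
    filter_upwards [hs'] with ω hs'
    by_cases hω : ω ∈ {ω' | (⊥ : EReal) < s.1 ω'}
    · rw [htdef, pc_pos hC s (MSp.mtop Ω) hω]
      exact (hs' hω).le
    · rw [htdef, pc_neg hC s (MSp.mtop Ω) hω]
      exact le_top
  · intro h hh
    have hkey := gl_key hFloc hFinc hGl s h (fun s' hs' =>
      hh (Gl s') (Set.mem_image_of_mem Gl hs'))
    -- off C
    have hs0 : (MSp.pc _ hC (MSp.mbot Ω) (MSp.mtop Ω)) ∈
        {s' : MSp Ω | ∀ᵐ ω ∂P, ω ∈ {ω' | ⊥ < s.1 ω'} → s'.1 ω < s.1 ω} := by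
      show ∀ᵐ ω ∂P, ω ∈ {ω' | ⊥ < s.1 ω'} →
        (MSp.pc _ hC (MSp.mbot Ω) (MSp.mtop Ω)).1 ω < s.1 ω
      apply Filter.Eventually.of_forall
      intro ω hω
      rw [pc_pos hC (MSp.mbot Ω) (MSp.mtop Ω) hω]
      exact hω
    have h1 := hh _ (Set.mem_image_of_mem Gl hs0)
    have h2 := gl_eq_on hFloc hGl hC.compl (MSp.pc _ hC (MSp.mbot Ω) (MSp.mtop Ω)) (MSp.mtop Ω)
      (Filter.Eventually.of_forall fun ω hω => pc_neg hC (MSp.mbot Ω) (MSp.mtop Ω) hω)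
    have h3 := gl_eq_on hFloc hGl hC.compl t (MSp.mtop Ω)
      (Filter.Eventually.of_forall fun ω hω => pc_neg hC s (MSp.mtop Ω) hω)
    filter_upwards [hkey, heqC, h1, h2, h3] with ω hkey heq h1 h2 h3
    by_cases hω : ω ∈ {ω' | (⊥ : EReal) < s.1 ω'}
    · rw [← heq hω]
      exact hkey hω
    · rw [h3 hω, ← h2 hω]
      exact h1

end CondInvAux
namespace CondInvAux

/-- Pointwise negation on `M`. -/
noncomputable def mneg (m : MSp Ω) : MSp Ω := ⟨fun ω => -(m.1 ω), m.2.neg⟩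

@[simp] lemma mneg_apply (m : MSp Ω) (ω : Ω) : (mneg m).1 ω = -(m.1 ω) := rfl

@[simp] lemma mneg_mneg (m : MSp Ω) : mneg (mneg m) = m := by
  apply Subtype.ext
  funext ω
  exact neg_neg _

lemma mneg_mtop : mneg (MSp.mtop Ω) = MSp.mbot Ω := by
  apply Subtype.ext
  funext ω
  show -(⊤ : EReal) = ⊥
  exact EReal.neg_top

lemma mneg_mbot : mneg (MSp.mbot Ω) = MSp.mtop Ω := by
  apply Subtype.ext
  funext ω
  show -(⊥ : EReal) = ⊤
  exact EReal.neg_bot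

lemma mneg_pc {A : Set Ω} (hA : MeasurableSet A) (m n : MSp Ω) :
    mneg (MSp.pc A hA m n) = MSp.pc A hA (mneg m) (mneg n) := by
  apply Subtype.ext
  funext ω
  by_cases hω : ω ∈ A
  · show -(MSp.pc A hA m n).1 ω = _
    rw [pc_pos hA m n hω, pc_pos hA (mneg m) (mneg n) hω]
    rfl
  · show -(MSp.pc A hA m n).1 ω = _
    rw [pc_neg hA m n hω, pc_neg hA (mneg m) (mneg n) hω]
    rfl

variable {P : Measure Ω} {F Gr : MSp Ω → MSp Ω}

lemma fn_local (hFloc : LocalAE P F) :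
    LocalAE P (fun m => mneg (F (mneg m))) := by
  intro A hA m n
  have h := hFloc A hA (mneg m) (mneg n)
  have e : mneg (MSp.pc A hA m n) = MSp.pc A hA (mneg m) (mneg n) := mneg_pc hA m n
  filter_upwards [h] with ω h
  show -((F (mneg (MSp.pc A hA m n))).1 ω) = _
  rw [e, h]
  by_cases hω : ω ∈ A
  · rw [pcf_pos hω, pcf_pos hω]
    rfl
  · rw [pcf_neg hω, pcf_neg hω]
    rfl

lemma fn_incr (hFinc : IncreasingAE P F) :
    IncreasingAE P (fun m => mneg (F (mneg m))) := by
  intro m n hmn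
  have h : (mneg n).1 ≤ᵐ[P] (mneg m).1 := by
    filter_upwards [hmn] with ω h
    exact EReal.neg_le_neg_iff.mpr h
  have := hFinc _ _ h
  filter_upwards [this] with ω h
  exact EReal.neg_le_neg_iff.mpr h

lemma gln_inv (hGr : IsCondRightInv P F Gr) :
    IsCondLeftInv P (fun m => mneg (F (mneg m))) (fun s => mneg (Gr (mneg s))) := by
  intro s
  obtain ⟨hBtop, g₀, hg₀, hgeq⟩ := hGr (mneg s)
  have setEq : {ω' | s.1 ω' ≤ (mneg (F (mneg (MSp.mtop Ω)))).1 ω'} =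
      {ω' | (F (MSp.mbot Ω)).1 ω' ≤ (mneg s).1 ω'} := by
    ext ω
    rw [mneg_mtop]
    constructor
    · exact fun h => EReal.le_neg_of_le_neg h
    · exact fun h => EReal.le_neg_of_le_neg h
  have ptIff : ∀ ω : Ω, (s.1 ω ≤ (mneg (F (mneg (MSp.mtop Ω)))).1 ω) ↔
      ((F (MSp.mbot Ω)).1 ω ≤ (mneg s).1 ω) := by
    intro ω
    rw [mneg_mtop]
    exact ⟨fun h => EReal.le_neg_of_le_neg h, fun h => EReal.le_neg_of_le_neg h⟩
  have memIff : ∀ m : MSp Ω,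
      ((∀ᵐ ω ∂P, ω ∈ {ω' | s.1 ω' ≤ (mneg (F (mneg (MSp.mtop Ω)))).1 ω'} →
        s.1 ω ≤ (mneg (F (mneg m))).1 ω) ↔
      (∀ᵐ ω ∂P, ω ∈ {ω' | (F (MSp.mbot Ω)).1 ω' ≤ (mneg s).1 ω'} →
        (F (mneg m)).1 ω ≤ (mneg s).1 ω)) := by
    intro m
    rw [setEq]
    constructor
    · intro h
      filter_upwards [h] with ω h hω
      exact EReal.le_neg_of_le_neg (h hω)
    · intro h
      filter_upwards [h] with ω h hω
      exact EReal.le_neg_of_le_neg (h hω)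
  constructor
  · filter_upwards [hBtop] with ω h hω
    show -((Gr (mneg s)).1 ω) = ⊤
    rw [h fun hc => hω ((ptIff ω).mpr hc)]
    exact EReal.neg_bot
  · refine ⟨mneg g₀, ⟨?_, ?_⟩, ?_⟩
    · intro f hf
      have hf' : mneg f ∈ {m : MSp Ω | ∀ᵐ ω ∂P,
          ω ∈ {ω' | (F (MSp.mbot Ω)).1 ω' ≤ (mneg s).1 ω'} →
          (F m).1 ω ≤ (mneg s).1 ω} := by
        have := (memIff f).mp hf
        exact this
      have := hg₀.1 _ hf'
      filter_upwards [this] with ω h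
      exact EReal.neg_le.mp h
    · intro h hh
      have : g₀.1 ≤ᵐ[P] (mneg h).1 := by
        apply hg₀.2
        intro f' hf'
        have hmem : mneg f' ∈ {m : MSp Ω | ∀ᵐ ω ∂P,
            ω ∈ {ω' | s.1 ω' ≤ (mneg (F (mneg (MSp.mtop Ω)))).1 ω'} →
            s.1 ω ≤ (mneg (F (mneg m))).1 ω} := by
          apply (memIff (mneg f')).mpr
          rw [mneg_mneg]
          exact hf'
        have := hh _ hmem
        filter_upwards [this] with ω h
        exact EReal.le_neg_of_le_neg h
      filter_upwards [this] with ω h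
      exact EReal.le_neg_of_le_neg h
    · filter_upwards [hgeq] with ω h hω
      show -((Gr (mneg s)).1 ω) = -(g₀.1 ω)
      rw [h ((ptIff ω).mp hω)]

lemma essSup_neg_image {X : Set (MSp Ω)} {g : MSp Ω}
    (h : IsEssSupM P ((fun f => mneg f) '' X) g) : IsEssInfM P X (mneg g) := by
  constructor
  · intro f hf
    have := h.1 _ (Set.mem_image_of_mem _ hf)
    filter_upwards [this] with ω h
    exact EReal.neg_le.mp h
  · intro h' hh'
    have : g.1 ≤ᵐ[P] (mneg h').1 := by
      apply h.2
      rintro f ⟨f₀, hf₀, rfl⟩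
      filter_upwards [hh' f₀ hf₀] with ω h
      exact EReal.neg_le_neg_iff.mpr h
    filter_upwards [this] with ω h
    exact EReal.le_neg_of_le_neg h

end CondInvAux
open CondInvAux in
/-- Conditional left- and right-inverses of a local, increasing map `F : M → M` respecting
a.e. equality are themselves local, increasing, respect a.e. equality, and are left-
(respectively right-) continuous. -/
theorem condInverse_basic_properties (P : Measure Ω) [IsProbabilityMeasure P]
    (F Gl Gr : MSp Ω → MSp Ω)
    (hFloc : LocalAE P F) (hFinc : IncreasingAE P F) (hFae : RespectsAE P F)
    (hGl : IsCondLeftInv P F Gl) (hGr : IsCondRightInv P F Gr) :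
    LocalAE P Gl ∧ IncreasingAE P Gl ∧ RespectsAE P Gl ∧
    LocalAE P Gr ∧ IncreasingAE P Gr ∧ RespectsAE P Gr ∧
    (∀ s : MSp Ω, ∃ g : MSp Ω,
      IsEssSupM P
        (Gl '' {s' : MSp Ω | ∀ᵐ ω ∂P, ω ∈ {ω' | ⊥ < s.1 ω'} → s'.1 ω < s.1 ω}) g ∧
      ∀ᵐ ω ∂P, ω ∈ {ω' | ⊥ < s.1 ω'} → (Gl s).1 ω = g.1 ω) ∧
    (∀ s : MSp Ω, ∃ g : MSp Ω,
      IsEssInfM P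
        (Gr '' {s' : MSp Ω | ∀ᵐ ω ∂P, ω ∈ {ω' | s.1 ω' < ⊤} → s.1 ω < s'.1 ω}) g ∧
      ∀ᵐ ω ∂P, ω ∈ {ω' | s.1 ω' < ⊤} → (Gr s).1 ω = g.1 ω) := by
  have hGlinc : IncreasingAE P Gl := gl_mono hFloc hGl
  have hFnloc := fn_local (P := P) hFloc
  have hFninc := fn_incr (P := P) hFinc
  have hGln := gln_inv (P := P) hGr
  have hGlninc := gl_mono hFnloc hGln
  have hGlnloc := gl_local hFnloc hGln
  have hGrinc : IncreasingAE P Gr := by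
    intro m n hmn
    have h : (mneg n).1 ≤ᵐ[P] (mneg m).1 := by
      filter_upwards [hmn] with ω h
      exact EReal.neg_le_neg_iff.mpr h
    have h2 := hGlninc _ _ h
    simp only [mneg_mneg] at h2
    filter_upwards [h2] with ω h2
    exact EReal.neg_le_neg_iff.mp h2
  have hGrloc : LocalAE P Gr := by
    intro A hA m n
    have h := hGlnloc A hA (mneg m) (mneg n)
    simp only [← mneg_pc, mneg_mneg] at h
    filter_upwards [h] with ω h
    by_cases hω : ω ∈ A
    · rw [pcf_pos hω]
      rw [pcf_pos hω] at h
      exact neg_injective h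
    · rw [pcf_neg hω]
      rw [pcf_neg hω] at h
      exact neg_injective h
  refine ⟨gl_local hFloc hGl, hGlinc, incr_respects P Gl hGlinc,
    hGrloc, hGrinc, incr_respects P Gr hGrinc,
    fun s => gl_leftCont hFloc hFinc hGl s, fun s => ?_⟩
  obtain ⟨g, hsup, heq⟩ := gl_leftCont hFnloc hFninc hGln (mneg s)
  have hCset : {ω' | (⊥ : EReal) < (mneg s).1 ω'} = {ω' | s.1 ω' < ⊤} := by
    ext ω
    show ⊥ < -(s.1 ω) ↔ s.1 ω < ⊤
    conv_lhs => rw [← EReal.neg_top]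
    exact EReal.neg_lt_neg_iff
  have himg : ((fun s' => mneg (Gr (mneg s'))) ''
      {s' : MSp Ω | ∀ᵐ ω ∂P, ω ∈ {ω' | ⊥ < (mneg s).1 ω'} → s'.1 ω < (mneg s).1 ω})
      = (fun f => mneg f) ''
        (Gr '' {s' : MSp Ω | ∀ᵐ ω ∂P, ω ∈ {ω' | s.1 ω' < ⊤} → s.1 ω < s'.1 ω}) := by
    ext f
    constructor
    · rintro ⟨s', hs', rfl⟩
      refine ⟨Gr (mneg s'), ⟨mneg s', ?_, rfl⟩, rfl⟩
      rw [hCset] at hs'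
      show ∀ᵐ ω ∂P, ω ∈ {ω' | s.1 ω' < ⊤} → s.1 ω < (mneg s').1 ω
      filter_upwards [hs'] with ω h hω
      exact EReal.lt_neg_of_lt_neg (h hω)
    · rintro ⟨f₀, ⟨s'', hs'', rfl⟩, rfl⟩
      refine ⟨mneg s'', ?_, ?_⟩
      · show ∀ᵐ ω ∂P, ω ∈ {ω' | ⊥ < (mneg s).1 ω'} → (mneg s'').1 ω < (mneg s).1 ω
        rw [hCset]
        filter_upwards [hs''] with ω h hω
        exact EReal.neg_lt_neg_iff.mpr (h hω)
      · show mneg (Gr (mneg (mneg s''))) = mneg (Gr s'')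
        rw [mneg_mneg]
  rw [himg] at hsup
  refine ⟨mneg g, essSup_neg_image hsup, ?_⟩
  simp only [mneg_mneg] at heq
  rw [hCset] at heq
  filter_upwards [heq] with ω h hω
  show (Gr s).1 ω = -(g.1 ω)
  rw [← h hω]
  exact (neg_neg _).symm
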